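/- arXiv:2510.13611 — 2 statements merged into one kernel-verified Lean document; each statement's English description precedes it below -/
import Mathlib

section
/- There is no vector v = (a,b,c) ∈ ℤ³ with ⟨v,v⟩ = 0 and ⟨(1,1,1),v⟩ = 1; equivalently, the lattice Λ₀ contains no class F with F² = 0 and L·F = 1, so the degree-18 polarised K3 lattice Λ₀ admits no unigonal class. -/
open Matrix

/-- The Gram matrix of the lattice `Λ₀` in the basis `(H₁, H₂, H₃)`. -/
def GramLambda0 : Matrix (Fin 3) (Fin 3) ℤ := !![0, 2, 3; 2, 0, 3; 3, 3, 2]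

/-- The symmetric bilinear pairing `⟨v, w⟩ = vᵀ G w` on `ℤ³` given by the Gram matrix. -/
def lambda0Pair (v w : Fin 3 → ℤ) : ℤ := v ⬝ᵥ GramLambda0.mulVec w

/-- The degree-18 polarised K3 lattice `Λ₀` admits no unigonal class: there is no
vector `F ∈ ℤ³` with `F² = 0` and `L·F = 1`, where `L = H₁ + H₂ + H₃ = (1,1,1)`. -/
theorem no_unigonal_class :
    ¬ ∃ v : Fin 3 → ℤ, lambda0Pair v v = 0 ∧ lambda0Pair ![1, 1, 1] v = 1 := by
  rintro ⟨v, h1, h2⟩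
  simp [lambda0Pair, GramLambda0, mulVec, dotProduct, Fin.sum_univ_three] at h1 h2
  set a := v 0; set b := v 1; set c := v 2
  -- key identity: 25*(a-b)^2 = 1 + 14*c - 126*c^2
  have key : 25*(a-b)^2 = 1 + 14*c - 126*c^2 := by nlinarith [h1, h2, sq_nonneg (a-b)]
  have hcc : c*(c-1) ≥ 0 ∧ c*(c+1) ≥ 0 := by
    constructor <;> rcases le_or_gt c 0 with h | h <;> nlinarith
  have hc0 : c = 0 := by nlinarith [sq_nonneg (a-b), hcc.1, hcc.2]
  rw [hc0] at key
  have : (a-b)^2 ≥ 1 ∨ a - b = 0 := by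
    rcases eq_or_ne (a-b) 0 with h|h
    · exact Or.inr h
    · exact Or.inl (by nlinarith [sq_nonneg (a-b-1), sq_nonneg (a-b+1)])
  rcases this with h|h <;> nlinarith
end

section
/- There are no integers a, b, c satisfying simultaneously 2c² + 4ab + 6ac + 6bc = 0 and 5(a+b) + 8c = 1. -/
/-- There are no integers `a`, `b`, `c` with `2c² + 4ab + 6ac + 6bc = 0` and
`5(a+b) + 8c = 1`. -/
theorem no_unigonal_diophantine :
    ¬ ∃ a b c : ℤ, 2 * c ^ 2 + 4 * a * b + 6 * a * c + 6 * b * c = 0 ∧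
      5 * (a + b) + 8 * c = 1 := by
  rintro ⟨a, b, c, h1, h2⟩
  have key : 25 * (a - b) ^ 2 = -126 * c ^ 2 + 14 * c + 1 := by nlinarith [h1, h2, sq_nonneg c]
  have hc : c = 0 := by
    rcases lt_trichotomy c 0 with h | h | h
    · nlinarith [sq_nonneg (a - b)]
    · exact h
    · nlinarith [sq_nonneg (a - b)]
  subst hc
  omega
end
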